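/- (Theorem 2.4 of the paper in the case μ = 0, classical Fourier transform.) Fix x ∈ ℝⁿ. The Kriging function κ_q(x), defined by κ_q(x)² := min{ Uᵀ A U − 2 Uᵀ R(x) + ψ(0) : U ∈ ℝ^M, Pᵀ U = S(x) }, has the representation κ_q(x)² = min{ (2π)^{−n} ∫_{ℝⁿ} |Σ_{j=1}^M u_j e^{i⟨x_j,t⟩} − e^{i⟨x,t⟩}|² ψ̂(t) dt : U = (u_1, …, u_M) ∈ ℝ^M, Pᵀ U = S(x) }, where R(x) := (ψ(x − x_1), …, ψ(x − x_M))ᵀ and S(x) := (p_1(x), …, p_Q(x))ᵀ, and both minima are attained. -/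

import Mathlib

open MeasureTheory Matrix

/-- e^{i⟨y,t⟩}, with the Euclidean inner product on ℝⁿ. -/
noncomputable def expI {n : ℕ} (y t : EuclideanSpace ℝ (Fin n)) : ℂ :=
  Complex.exp (Complex.I * ((inner ℝ y t : ℝ) : ℂ))

/-- The constant (2π)^{−n}. -/
noncomputable def c2pin (n : ℕ) : ℝ := ((2 * Real.pi) ^ n)⁻¹

lemma expI_norm {n : ℕ} (y t : EuclideanSpace ℝ (Fin n)) : ‖expI y t‖ = 1 := by
  simp [expI, Complex.norm_exp]
lemma expI_conj {n : ℕ} (y t : EuclideanSpace ℝ (Fin n)) :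
    (starRingEnd ℂ) (expI y t) = expI (-y) t := by
  rw [expI, expI, ← Complex.exp_conj]
  simp [inner_neg_left]
lemma expI_mul {n : ℕ} (y z t : EuclideanSpace ℝ (Fin n)) :
    expI y t * expI z t = expI (y + z) t := by
  rw [expI, expI, expI, ← Complex.exp_add, inner_add_left]
  push_cast
  ring_nf
lemma expI_zero {n : ℕ} (t : EuclideanSpace ℝ (Fin n)) : expI 0 t = 1 := by
  simp [expI, inner_zero_left]
lemma expI_continuous {n : ℕ} (y : EuclideanSpace ℝ (Fin n)) : Continuous (expI y) := by
  apply Complex.continuous_exp.comp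
  exact continuous_const.mul (Complex.continuous_ofReal.comp (Continuous.inner continuous_const continuous_id))
lemma integrable_expI_mul {n : ℕ} (ψhat : EuclideanSpace ℝ (Fin n) → ℝ)
    (hint : Integrable ψhat) (y : EuclideanSpace ℝ (Fin n)) :
    Integrable (fun t => expI y t * (ψhat t : ℂ)) := by
  apply (hint.ofReal).bdd_mul ((expI_continuous y).aestronglyMeasurable)
  exact Filter.Eventually.of_forall (fun t => le_of_eq (expI_norm y t))

lemma psi_even {n : ℕ} (ψ ψhat : EuclideanSpace ℝ (Fin n) → ℝ)
    (hinv : ∀ y, (ψ y : ℂ) = (c2pin n : ℂ) * ∫ t, expI y t * (ψhat t : ℂ))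
    (y : EuclideanSpace ℝ (Fin n)) : ψ (-y) = ψ y := by
  have h1 : (∫ t, expI (-y) t * (ψhat t : ℂ)) =
      (starRingEnd ℂ) (∫ t, expI y t * (ψhat t : ℂ)) := by
    rw [← integral_conj]
    congr 1; funext t
    rw [RingHom.map_mul, expI_conj, Complex.conj_ofReal]
  have := hinv (-y)
  rw [h1] at this
  have h2 : ((ψ (-y) : ℝ) : ℂ) = (starRingEnd ℂ) ((ψ y : ℝ) : ℂ) := by
    rw [this, hinv y, RingHom.map_mul, Complex.conj_ofReal]
  rw [Complex.conj_ofReal] at h2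
  exact_mod_cast h2

lemma key_pointwise {n M : ℕ} (ψ ψhat : EuclideanSpace ℝ (Fin n) → ℝ)
    (hψhat_int : Integrable ψhat)
    (hinv : ∀ y, (ψ y : ℂ) = (c2pin n : ℂ) * ∫ t, expI y t * (ψhat t : ℂ))
    (x : Fin M → EuclideanSpace ℝ (Fin n)) (x₀ : EuclideanSpace ℝ (Fin n))
    (U : Fin M → ℝ) :
    c2pin n * ∫ t, ‖(∑ j, (U j : ℂ) * expI (x j) t) - expI x₀ t‖ ^ 2 * ψhat t
      = (∑ j, ∑ k, U j * U k * ψ (x j - x k)) - 2 * ∑ j, U j * ψ (x₀ - x j) + ψ 0 := by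
  set z : EuclideanSpace ℝ (Fin n) → ℂ := fun t => (∑ j, (U j : ℂ) * expI (x j) t) - expI x₀ t with hz
  -- pointwise expansion
  have hpt : ∀ t, (‖z t‖ ^ 2 * ψhat t : ℂ)
      = (∑ j, ∑ k, ((U j : ℂ) * U k) * (expI (x j - x k) t * ψhat t))
        - (∑ j, (U j : ℂ) * (expI (x j - x₀) t * ψhat t))
        - (∑ k, (U k : ℂ) * (expI (x₀ - x k) t * ψhat t))
        + expI 0 t * ψhat t := by
    intro t
    have h1 : (‖z t‖ ^ 2 : ℂ) = z t * (starRingEnd ℂ) (z t) := by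
      rw [Complex.mul_conj']
    have hconj : (starRingEnd ℂ) (z t) = (∑ k, (U k : ℂ) * expI (-(x k)) t) - expI (-x₀) t := by
      rw [hz]
      simp only [RingHom.map_sub, map_sum, RingHom.map_mul, Complex.conj_ofReal, expI_conj]
    have h2 : z t * (starRingEnd ℂ) (z t)
        = (∑ j, (U j : ℂ) * expI (x j) t) * (∑ k, (U k : ℂ) * expI (-(x k)) t)
          - (∑ j, (U j : ℂ) * expI (x j) t) * expI (-x₀) t
          - expI x₀ t * (∑ k, (U k : ℂ) * expI (-(x k)) t)
          + expI x₀ t * expI (-x₀) t := by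
      rw [hconj, hz]; ring
    have p1 : (∑ j, (U j : ℂ) * expI (x j) t) * (∑ k, (U k : ℂ) * expI (-(x k)) t)
        = ∑ j, ∑ k, ((U j : ℂ) * U k) * expI (x j - x k) t := by
      rw [Finset.sum_mul_sum]
      refine Finset.sum_congr rfl fun j _ => Finset.sum_congr rfl fun k _ => ?_
      rw [show expI (x j - x k) t = expI (x j) t * expI (-(x k)) t from by
        rw [expI_mul, sub_eq_add_neg]]
      ring
    have p2 : (∑ j, (U j : ℂ) * expI (x j) t) * expI (-x₀) t
        = ∑ j, (U j : ℂ) * expI (x j - x₀) t := by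
      rw [Finset.sum_mul]
      refine Finset.sum_congr rfl fun j _ => ?_
      rw [show expI (x j - x₀) t = expI (x j) t * expI (-x₀) t from by
        rw [expI_mul, sub_eq_add_neg]]
      ring
    have p3 : expI x₀ t * (∑ k, (U k : ℂ) * expI (-(x k)) t)
        = ∑ k, (U k : ℂ) * expI (x₀ - x k) t := by
      rw [Finset.mul_sum]
      refine Finset.sum_congr rfl fun k _ => ?_
      rw [show expI (x₀ - x k) t = expI x₀ t * expI (-(x k)) t from by
        rw [expI_mul, sub_eq_add_neg]]
      ring
    have p4 : expI x₀ t * expI (-x₀) t = expI 0 t := by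
      rw [expI_mul]; simp
    rw [h1, h2, p1, p2, p3, p4]
    simp only [sub_mul, add_mul, Finset.sum_mul, mul_assoc]
  have hint1 : ∀ (y : EuclideanSpace ℝ (Fin n)), Integrable (fun t => expI y t * (ψhat t : ℂ)) :=
    integrable_expI_mul ψhat hψhat_int
  set E : EuclideanSpace ℝ (Fin n) → ℂ := fun y => ∫ t, expI y t * (ψhat t : ℂ) with hE
  have hc : ∀ y, (c2pin n : ℂ) * E y = (ψ y : ℂ) := fun y => (hinv y).symm
  have hintsum1 : Integrable (fun t => ∑ j, ∑ k, ((U j : ℂ) * U k) * (expI (x j - x k) t * ψhat t)) :=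
    integrable_finset_sum _ fun j _ => integrable_finset_sum _ fun k _ => (hint1 _).const_mul _
  have hintsum2 : Integrable (fun t => ∑ j, (U j : ℂ) * (expI (x j - x₀) t * ψhat t)) :=
    integrable_finset_sum _ fun j _ => (hint1 _).const_mul _
  have hintsum3 : Integrable (fun t => ∑ k, (U k : ℂ) * (expI (x₀ - x k) t * ψhat t)) :=
    integrable_finset_sum _ fun k _ => (hint1 _).const_mul _
  have i1 : (∫ t, ∑ j, ∑ k, ((U j : ℂ) * U k) * (expI (x j - x k) t * ψhat t))
      = ∑ j, ∑ k, ((U j : ℂ) * U k) * E (x j - x k) := by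
    rw [integral_finset_sum _ (fun j _ => integrable_finset_sum _ fun k _ => (hint1 _).const_mul _)]
    refine Finset.sum_congr rfl fun j _ => ?_
    rw [integral_finset_sum _ (fun k _ => (hint1 _).const_mul _)]
    exact Finset.sum_congr rfl fun k _ => integral_const_mul _ _
  have i2 : (∫ t, ∑ j, (U j : ℂ) * (expI (x j - x₀) t * ψhat t))
      = ∑ j, (U j : ℂ) * E (x j - x₀) := by
    rw [integral_finset_sum _ (fun j _ => (hint1 _).const_mul _)]
    exact Finset.sum_congr rfl fun j _ => integral_const_mul _ _
  have i3 : (∫ t, ∑ k, (U k : ℂ) * (expI (x₀ - x k) t * ψhat t))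
      = ∑ k, (U k : ℂ) * E (x₀ - x k) := by
    rw [integral_finset_sum _ (fun k _ => (hint1 _).const_mul _)]
    exact Finset.sum_congr rfl fun k _ => integral_const_mul _ _
  have e1 : (∫ t, ((∑ j, ∑ k, ((U j : ℂ) * U k) * (expI (x j - x k) t * ψhat t))
        - ∑ j, (U j : ℂ) * (expI (x j - x₀) t * ψhat t)))
      = (∫ t, ∑ j, ∑ k, ((U j : ℂ) * U k) * (expI (x j - x k) t * ψhat t))
        - ∫ t, ∑ j, (U j : ℂ) * (expI (x j - x₀) t * ψhat t) :=
    integral_sub hintsum1 hintsum2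
  have e2 : (∫ t, ((∑ j, ∑ k, ((U j : ℂ) * U k) * (expI (x j - x k) t * ψhat t))
        - (∑ j, (U j : ℂ) * (expI (x j - x₀) t * ψhat t))
        - ∑ k, (U k : ℂ) * (expI (x₀ - x k) t * ψhat t)))
      = (∫ t, ((∑ j, ∑ k, ((U j : ℂ) * U k) * (expI (x j - x k) t * ψhat t))
        - ∑ j, (U j : ℂ) * (expI (x j - x₀) t * ψhat t)))
        - ∫ t, ∑ k, (U k : ℂ) * (expI (x₀ - x k) t * ψhat t) :=
    integral_sub (hintsum1.sub hintsum2) hintsum3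
  have e3 : (∫ t, ((∑ j, ∑ k, ((U j : ℂ) * U k) * (expI (x j - x k) t * ψhat t))
        - (∑ j, (U j : ℂ) * (expI (x j - x₀) t * ψhat t))
        - (∑ k, (U k : ℂ) * (expI (x₀ - x k) t * ψhat t))
        + expI 0 t * ψhat t))
      = (∫ t, ((∑ j, ∑ k, ((U j : ℂ) * U k) * (expI (x j - x k) t * ψhat t))
        - (∑ j, (U j : ℂ) * (expI (x j - x₀) t * ψhat t))
        - ∑ k, (U k : ℂ) * (expI (x₀ - x k) t * ψhat t)))
        + ∫ t, expI 0 t * ψhat t :=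
    integral_add ((hintsum1.sub hintsum2).sub hintsum3) (hint1 0)
  have hI : (∫ t, ((‖z t‖ : ℂ) ^ 2 * (ψhat t : ℂ)))
      = (∑ j, ∑ k, ((U j : ℂ) * U k) * E (x j - x k))
        - (∑ j, (U j : ℂ) * E (x j - x₀)) - (∑ k, (U k : ℂ) * E (x₀ - x k)) + E 0 := by
    rw [integral_congr_ae (Filter.Eventually.of_forall hpt), e3, e2, e1, i1, i2, i3]
  have q1 : (c2pin n : ℂ) * (∑ j, ∑ k, ((U j : ℂ) * U k) * E (x j - x k))
      = ∑ j, ∑ k, ((U j : ℂ) * U k) * ((ψ (x j - x k) : ℝ) : ℂ) := by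
    rw [Finset.mul_sum]
    refine Finset.sum_congr rfl fun j _ => ?_
    rw [Finset.mul_sum]
    refine Finset.sum_congr rfl fun k _ => ?_
    rw [← hc]; ring
  have q2 : (c2pin n : ℂ) * (∑ j, (U j : ℂ) * E (x j - x₀))
      = ∑ j, (U j : ℂ) * ((ψ (x₀ - x j) : ℝ) : ℂ) := by
    rw [Finset.mul_sum]
    refine Finset.sum_congr rfl fun j _ => ?_
    have he : ψ (x j - x₀) = ψ (x₀ - x j) := by
      rw [show x j - x₀ = -(x₀ - x j) from by abel, psi_even ψ ψhat hinv]
    rw [← he, ← hc]; ring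
  have q3 : (c2pin n : ℂ) * (∑ k, (U k : ℂ) * E (x₀ - x k))
      = ∑ k, (U k : ℂ) * ((ψ (x₀ - x k) : ℝ) : ℂ) := by
    rw [Finset.mul_sum]
    refine Finset.sum_congr rfl fun k _ => ?_
    rw [← hc]; ring
  have final : ((c2pin n : ℝ) : ℂ) * ∫ t, ((‖z t‖ : ℂ) ^ 2 * (ψhat t : ℂ))
      = (∑ j, ∑ k, ((U j : ℂ) * U k) * ((ψ (x j - x k) : ℝ) : ℂ))
        - 2 * (∑ j, (U j : ℂ) * ((ψ (x₀ - x j) : ℝ) : ℂ)) + ((ψ 0 : ℝ) : ℂ) := by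
    rw [hI, mul_add, mul_sub, mul_sub, q1, q2, q3, hc]; ring
  apply Complex.ofReal_injective
  have hcast : ((∫ t, ‖z t‖ ^ 2 * ψhat t : ℝ) : ℂ)
      = ∫ t, ((‖z t‖ : ℂ) ^ 2 * (ψhat t : ℂ)) := by
    rw [show (fun t : EuclideanSpace ℝ (Fin n) => ((‖z t‖ : ℂ)) ^ 2 * (ψhat t : ℂ))
        = fun t => ((‖z t‖ ^ 2 * ψhat t : ℝ) : ℂ) from by funext t; push_cast; ring]
    exact (integral_ofReal).symm
  rw [Complex.ofReal_mul, hcast, final]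
  push_cast
  ring

lemma exists_min_on_closed {M : ℕ} (f : (Fin M → ℝ) → ℝ) (hf : Continuous f)
    (C : Set (Fin M → ℝ)) (hC : IsClosed C) (U₀ : Fin M → ℝ) (hU₀ : U₀ ∈ C)
    (Rad : ℝ) (hcoer : ∀ U ∈ C, Rad ≤ ‖U - U₀‖ → f U₀ ≤ f U) :
    ∃ m ∈ C, ∀ U ∈ C, f m ≤ f U := by
  set D := C ∩ Metric.closedBall U₀ (max Rad 0) with hD
  have hDcompact : IsCompact D :=
    (isCompact_closedBall U₀ (max Rad 0)).inter_left hC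
  have hU₀D : U₀ ∈ D := ⟨hU₀, Metric.mem_closedBall_self (le_max_right _ _)⟩
  obtain ⟨m, hmD, hmin⟩ := hDcompact.exists_isMinOn ⟨U₀, hU₀D⟩ hf.continuousOn
  refine ⟨m, hmD.1, fun U hU => ?_⟩
  by_cases h : ‖U - U₀‖ ≤ max Rad 0
  · exact hmin ⟨hU, by simpa [Metric.mem_closedBall, dist_eq_norm] using h⟩
  · exact le_trans (hmin hU₀D)
      (hcoer U hU (le_trans (le_max_left _ _) (le_of_not_ge h)))


/-- Theorem 2.4 of the paper in the case μ = 0: the two minimization problems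
defining the Kriging function κ_q(x)² — the quadratic-form one and the Fourier-integral one —
both attain their minima and have the same minimum value. -/
theorem kriging_function_representation
    (n M q Q : ℕ) (hn : 0 < n) (hM : 0 < M) (hq : 0 < q)
    (x : Fin M → EuclideanSpace ℝ (Fin n))
    (hx : Function.Injective x)
    (pb : Fin Q → MvPolynomial (Fin n) ℝ)
    (hdeg : ∀ i, (pb i).totalDegree < q)
    (hind : LinearIndependent ℝ pb)
    (hspan : ∀ p : MvPolynomial (Fin n) ℝ, p.totalDegree < q →
      p ∈ Submodule.span ℝ (Set.range pb))
    (huni : ∀ p : MvPolynomial (Fin n) ℝ, p.totalDegree < q →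
      (∀ j, MvPolynomial.eval (fun l => x j l) p = 0) → p = 0)
    (ψ : EuclideanSpace ℝ (Fin n) → ℝ) (hψcont : Continuous ψ)
    (ψhat : EuclideanSpace ℝ (Fin n) → ℝ)
    (hψhat_nonneg : ∀ t, 0 ≤ ψhat t)
    (hψhat_int : Integrable ψhat)
    (hinv : ∀ y : EuclideanSpace ℝ (Fin n),
      (ψ y : ℂ) = (c2pin n : ℂ) * ∫ t, expI y t * (ψhat t : ℂ))
    (hcpd : ∀ c : Fin M → ℝ, c ≠ 0 →
      (∀ p : MvPolynomial (Fin n) ℝ, p.totalDegree < q →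
        ∑ j, c j * MvPolynomial.eval (fun l => x j l) p = 0) →
      0 < ∑ j, ∑ k, c j * c k * ψ (x j - x k))
    (A : Matrix (Fin M) (Fin M) ℝ) (hA : ∀ j k, A j k = ψ (x j - x k))
    (P : Matrix (Fin M) (Fin Q) ℝ)
    (hP : ∀ j i, P j i = MvPolynomial.eval (fun l => x j l) (pb i))
    (x₀ : EuclideanSpace ℝ (Fin n))
    (R : Fin M → ℝ) (hR : ∀ j, R j = ψ (x₀ - x j))
    (S : Fin Q → ℝ) (hS : ∀ i, S i = MvPolynomial.eval (fun l => x₀ l) (pb i)) :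
    ∃ κsq : ℝ,
      IsLeast {v : ℝ | ∃ U : Fin M → ℝ, Pᵀ *ᵥ U = S ∧
        v = U ⬝ᵥ (A *ᵥ U) - 2 * (U ⬝ᵥ R) + ψ 0} κsq ∧
      IsLeast {v : ℝ | ∃ U : Fin M → ℝ, Pᵀ *ᵥ U = S ∧
        v = c2pin n * ∫ t, ‖(∑ j, (U j : ℂ) * expI (x j) t) - expI x₀ t‖ ^ 2 * ψhat t} κsq := by

  classical
  -- continuity of the constraint map
  have hTcont : Continuous (fun U : Fin M → ℝ => Pᵀ *ᵥ U) := by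
    apply continuous_pi; intro i
    simp only [mulVec, dotProduct]
    exact continuous_finset_sum _ fun j _ => continuous_const.mul (continuous_apply j)
  -- the constraint set is nonempty
  have hsurj : ∃ U₀ : Fin M → ℝ, Pᵀ *ᵥ U₀ = S := by
    let T : (Fin M → ℝ) →ₗ[ℝ] EuclideanSpace ℝ (Fin Q) :=
      { toFun := fun U => WithLp.toLp 2 (Pᵀ *ᵥ U)
        map_add' := fun u v => by simp [Matrix.mulVec_add]
        map_smul' := fun c u => by simp [Matrix.mulVec_smul] }
    have hrange : LinearMap.range T = ⊤ := by
      by_contra hne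
      have hbot : (LinearMap.range T)ᗮ ≠ ⊥ := fun h0 =>
        hne (Submodule.orthogonal_eq_bot_iff.mp h0)
      obtain ⟨v, hv, hv0⟩ := Submodule.exists_mem_ne_zero_of_ne_bot hbot
      have hvj : ∀ j, ∑ i, P j i * v i = 0 := by
        intro j
        have h1 := (Submodule.mem_orthogonal _ v).mp hv (T (Pi.single j 1)) ⟨_, rfl⟩
        rw [show (inner ℝ (T (Pi.single j 1)) v : ℝ) = ∑ i, P j i * v i from ?_] at h1
        · exact h1
        rw [PiLp.inner_apply]
        refine Finset.sum_congr rfl fun i _ => ?_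
        show v i * (Pᵀ *ᵥ Pi.single j 1) i = P j i * v i
        simp [Matrix.mulVec_single, Matrix.transpose_apply, mul_comm]
      set p : MvPolynomial (Fin n) ℝ := ∑ i, v i • pb i with hp
      have hdegp : p.totalDegree < q := by
        refine lt_of_le_of_lt (MvPolynomial.totalDegree_finset_sum _ _) ?_
        rw [Finset.sup_lt_iff (by exact hq)]
        intro i _
        exact lt_of_le_of_lt (MvPolynomial.totalDegree_smul_le _ _) (hdeg i)
      have hzero : ∀ j, MvPolynomial.eval (fun l => x j l) p = 0 := by
        intro j
        rw [hp, map_sum]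
        simp only [MvPolynomial.smul_eval]
        rw [← hvj j]
        exact Finset.sum_congr rfl fun i _ => by rw [hP]; ring
      have hp0 : p = 0 := huni p hdegp hzero
      have hv00 : ∀ i, v i = 0 := by
        have := Fintype.linearIndependent_iff.mp hind v (by rw [← hp, hp0])
        exact this
      exact hv0 (by ext i; exact hv00 i)
    obtain ⟨U₀, hU₀⟩ := LinearMap.range_eq_top.mp hrange (WithLp.toLp 2 S)
    exact ⟨U₀, congrArg WithLp.ofLp hU₀⟩
  -- quadratic form as double sum
  have hquad : ∀ U W : Fin M → ℝ,
      U ⬝ᵥ (A *ᵥ W) = ∑ j, ∑ k, U j * W k * ψ (x j - x k) := by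
    intro U W
    simp only [dotProduct, mulVec]
    refine Finset.sum_congr rfl fun j _ => ?_
    rw [Finset.mul_sum]
    refine Finset.sum_congr rfl fun k _ => ?_
    rw [hA]; ring
  -- positivity of the quadratic form on the kernel
  have hker : ∀ W : Fin M → ℝ, Pᵀ *ᵥ W = 0 → W ≠ 0 → 0 < W ⬝ᵥ (A *ᵥ W) := by
    intro W hWK hW0
    have hLall : ∀ p ∈ Submodule.span ℝ (Set.range pb),
        ∑ j, W j * MvPolynomial.eval (fun l => x j l) p = 0 := by
      intro p hpmem
      induction hpmem using Submodule.span_induction with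
      | mem p hpm =>
        obtain ⟨i, rfl⟩ := hpm
        have h0 : (Pᵀ *ᵥ W) i = 0 := by rw [hWK]; rfl
        rw [show ∑ j, W j * MvPolynomial.eval (fun l => x j l) (pb i) = (Pᵀ *ᵥ W) i from ?_, h0]
        simp only [mulVec, dotProduct, Matrix.transpose_apply]
        exact Finset.sum_congr rfl fun j _ => by rw [hP]; ring
      | zero => simp
      | add a b _ _ iha ihb =>
        simp only [map_add, mul_add, Finset.sum_add_distrib, iha, ihb, add_zero]
      | smul a p _ ih =>
        simp only [MvPolynomial.smul_eval, mul_left_comm, ← Finset.mul_sum, ih, mul_zero]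
    have := hcpd W hW0 (fun p hdp => hLall p (hspan p hdp))
    rwa [hquad W W]
  -- uniform positivity constant on the kernel
  have hα : ∃ α > 0, ∀ W : Fin M → ℝ, Pᵀ *ᵥ W = 0 → α * ‖W‖ ^ 2 ≤ W ⬝ᵥ (A *ᵥ W) := by
    have hqc : Continuous fun W : Fin M → ℝ => W ⬝ᵥ (A *ᵥ W) := by
      simp only [dotProduct, mulVec]
      exact continuous_finset_sum _ fun j _ => (continuous_apply j).mul
        (continuous_finset_sum _ fun k _ => continuous_const.mul (continuous_apply k))
    by_cases hK : ∀ W : Fin M → ℝ, Pᵀ *ᵥ W = 0 → W = 0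
    · refine ⟨1, one_pos, fun W hW => ?_⟩
      rw [hK W hW]; simp
    · push_neg at hK
      obtain ⟨W₁, hW₁K, hW₁0⟩ := hK
      set Sph : Set (Fin M → ℝ) := {W | Pᵀ *ᵥ W = 0 ∧ ‖W‖ = 1} with hSphdef
      have hSphC : IsCompact Sph := by
        have : Sph = {W : Fin M → ℝ | Pᵀ *ᵥ W = 0} ∩ Metric.sphere 0 1 := by
          ext W
          simp [hSphdef, Set.mem_setOf_eq, mem_sphere_iff_norm, sub_zero]
        rw [this]
        exact (isCompact_sphere 0 1).inter_left (isClosed_eq hTcont continuous_const)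
      have hW₂ : (‖W₁‖⁻¹ • W₁) ∈ Sph := by
        constructor
        · rw [Matrix.mulVec_smul, hW₁K, smul_zero]
        · rw [norm_smul, norm_inv, norm_norm,
            inv_mul_cancel₀ (norm_ne_zero_iff.mpr hW₁0)]
      obtain ⟨m, hmS, hmin⟩ := hSphC.exists_isMinOn ⟨_, hW₂⟩ hqc.continuousOn
      obtain ⟨hmK, hmn⟩ := hmS
      have hm0 : m ≠ 0 := by
        intro h
        rw [h, norm_zero] at hmn
        exact one_ne_zero hmn.symm
      refine ⟨m ⬝ᵥ (A *ᵥ m), hker m hmK hm0, fun W hWK => ?_⟩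
      rcases eq_or_ne W 0 with rfl | hW0
      · simp
      · have hnW : ‖W‖ ≠ 0 := norm_ne_zero_iff.mpr hW0
        set V : Fin M → ℝ := ‖W‖⁻¹ • W with hV
        have hVS : V ∈ Sph := by
          constructor
          · rw [hV, Matrix.mulVec_smul, hWK, smul_zero]
          · rw [hV, norm_smul, norm_inv, norm_norm, inv_mul_cancel₀ hnW]
        have hWV : W = ‖W‖ • V := by
          rw [hV, smul_smul, mul_inv_cancel₀ hnW, one_smul]
        have hscale : W ⬝ᵥ (A *ᵥ W) = ‖W‖ ^ 2 * (V ⬝ᵥ (A *ᵥ V)) := by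
          conv_lhs => rw [hWV]
          rw [Matrix.mulVec_smul, smul_dotProduct, dotProduct_smul,
            smul_eq_mul, smul_eq_mul]
          ring
        have := hmin hVS
        rw [hscale]
        have h2 : (0:ℝ) ≤ ‖W‖ ^ 2 := sq_nonneg _
        calc m ⬝ᵥ (A *ᵥ m) * ‖W‖ ^ 2 ≤ (V ⬝ᵥ (A *ᵥ V)) * ‖W‖ ^ 2 :=
              mul_le_mul_of_nonneg_right this h2
          _ = ‖W‖ ^ 2 * (V ⬝ᵥ (A *ᵥ V)) := by ring
  obtain ⟨α, hαpos, hαle⟩ := hα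
  obtain ⟨U₀, hU₀⟩ := hsurj
  -- objective function and its continuity
  set f : (Fin M → ℝ) → ℝ := fun U => U ⬝ᵥ (A *ᵥ U) - 2 * (U ⬝ᵥ R) + ψ 0 with hfdef
  have hfcont : Continuous f := by
    rw [hfdef]
    have h1 : Continuous fun U : Fin M → ℝ => U ⬝ᵥ (A *ᵥ U) := by
      simp only [dotProduct, mulVec]
      exact continuous_finset_sum _ fun j _ => (continuous_apply j).mul
        (continuous_finset_sum _ fun k _ => continuous_const.mul (continuous_apply k))
    have h2 : Continuous fun U : Fin M → ℝ => U ⬝ᵥ R := by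
      simp only [dotProduct]
      exact continuous_finset_sum _ fun j _ => (continuous_apply j).mul continuous_const
    exact (h1.sub (continuous_const.mul h2)).add continuous_const
  -- expansion around U₀
  set b : Fin M → ℝ := A *ᵥ U₀ + Aᵀ *ᵥ U₀ - (2:ℝ) • R with hbdef
  have hexpand : ∀ W : Fin M → ℝ, f (U₀ + W) = f U₀ + W ⬝ᵥ (A *ᵥ W) + W ⬝ᵥ b := by
    intro W
    have hswap : U₀ ⬝ᵥ (A *ᵥ W) = W ⬝ᵥ (Aᵀ *ᵥ U₀) := by
      rw [Matrix.mulVec_transpose, dotProduct_comm W, Matrix.dotProduct_mulVec]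
    simp only [hfdef, hbdef, Matrix.mulVec_add, dotProduct_add, add_dotProduct,
      dotProduct_sub, dotProduct_smul, smul_eq_mul]
    rw [hswap]
    ring
  -- bound for the linear term
  set B : ℝ := ∑ j, |b j| with hBdef
  have hBnn : 0 ≤ B := Finset.sum_nonneg fun j _ => abs_nonneg _
  have hWb : ∀ W : Fin M → ℝ, -(‖W‖ * B) ≤ W ⬝ᵥ b := by
    intro W
    have habs : |W ⬝ᵥ b| ≤ ‖W‖ * B := by
      rw [hBdef, Finset.mul_sum]
      refine le_trans (Finset.abs_sum_le_sum_abs _ _) (Finset.sum_le_sum fun j _ => ?_)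
      rw [abs_mul]
      exact mul_le_mul_of_nonneg_right
        (by rw [← Real.norm_eq_abs]; exact norm_le_pi_norm W j) (abs_nonneg _)
    linarith [neg_abs_le (W ⬝ᵥ b)]
  -- the constraint set
  set C : Set (Fin M → ℝ) := {U | Pᵀ *ᵥ U = S} with hCdef
  have hCclosed : IsClosed C := isClosed_eq hTcont continuous_const
  have hU₀C : U₀ ∈ C := hU₀
  -- coercivity
  have hcoer : ∀ U ∈ C, (B + 1) / α ≤ ‖U - U₀‖ → f U₀ ≤ f U := by
    intro U hU hrad
    set W : Fin M → ℝ := U - U₀ with hWdef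
    have hWK : Pᵀ *ᵥ W = 0 := by
      rw [hWdef, Matrix.mulVec_sub, hU, hU₀, sub_self]
    have hfU : f U = f U₀ + W ⬝ᵥ (A *ᵥ W) + W ⬝ᵥ b := by
      rw [← hexpand W, hWdef]
      congr 1
      abel
    have h1 : α * ‖W‖ ^ 2 ≤ W ⬝ᵥ (A *ᵥ W) := hαle W hWK
    have h2 : -(‖W‖ * B) ≤ W ⬝ᵥ b := hWb W
    have h3 : B + 1 ≤ α * ‖W‖ := by
      rw [div_le_iff₀ hαpos] at hrad
      linarith [hrad]
    have h4 : (0:ℝ) ≤ ‖W‖ := norm_nonneg W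
    nlinarith [hfU]
  obtain ⟨m, hmC, hmin⟩ := exists_min_on_closed f hfcont C hCclosed U₀ hU₀C ((B + 1) / α) hcoer
  -- equality of the two objectives
  have hobj : ∀ U : Fin M → ℝ, f U
      = c2pin n * ∫ t, ‖(∑ j, (U j : ℂ) * expI (x j) t) - expI x₀ t‖ ^ 2 * ψhat t := by
    intro U
    have h1 : f U = (∑ j, ∑ k, U j * U k * ψ (x j - x k))
        - 2 * ∑ j, U j * ψ (x₀ - x j) + ψ 0 := by
      have hUR : U ⬝ᵥ R = ∑ j, U j * ψ (x₀ - x j) := by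
        simp only [dotProduct]
        exact Finset.sum_congr rfl fun j _ => by rw [hR]
      rw [hfdef]
      simp only
      rw [hquad U U, hUR]
    rw [h1]
    exact (key_pointwise ψ ψhat hψhat_int hinv x x₀ U).symm
  refine ⟨f m, ⟨⟨m, hmC, rfl⟩, ?_⟩, ⟨⟨m, hmC, hobj m⟩, ?_⟩⟩
  · rintro v ⟨U, hU, rfl⟩
    exact hmin U hU
  · rintro v ⟨U, hU, rfl⟩
    rw [← hobj U]
    exact hmin U hU
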